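/- Let G be a connected graph, d ≥ 2, and let H_1, …, H_r be isometric subgraphs of G such that d_G(H_i, H_j) ≥ d for all i ≠ j. If S_i is a general d-position set of H_i for each i, then the union S_1 ∪ ⋯ ∪ S_r is a general d-position set of G. Consequently gp_d(G) ≥ Σ_i gp_d(H_i). -/
import Mathlib


/-- `S` is a general `d`-position set of `G`: no three distinct vertices of `S`
lie on a common geodesic of length at most `d`. -/
def IsGenDPos {V : Type*} (G : SimpleGraph V) (d : ℕ) (S : Set V) : Prop :=
  ∀ ⦃u v w : V⦄, u ∈ S → v ∈ S → w ∈ S → u ≠ v → u ≠ w → v ≠ w →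
    G.dist u v + G.dist v w = G.dist u w → G.dist u w ≤ d → False

/-- The general `d`-position number of `G`. -/
noncomputable def gpNum {V : Type*} (G : SimpleGraph V) (d : ℕ) : ℕ :=
  sSup {n | ∃ S : Set V, IsGenDPos G d S ∧ S.ncard = n}

lemma union_isGenDPos {V : Type*} [Finite V] (G : SimpleGraph V) (hG : G.Connected)
    (d : ℕ) (hd : 2 ≤ d) (r : ℕ) (A : Fin r → Set V)
    (hiso : ∀ i, ∀ u v : (A i), (G.induce (A i)).dist u v = G.dist u.val v.val)
    (hfar : ∀ i j, i ≠ j → ∀ u ∈ A i, ∀ v ∈ A j, d ≤ G.dist u v)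
    (S : Fin r → Set V) (hsub : ∀ i, S i ⊆ A i)
    (hgp : ∀ i, IsGenDPos (G.induce (A i)) d (Subtype.val ⁻¹' (S i))) :
    IsGenDPos G d (⋃ i, S i) := by
  intro u v w hu hv hw huv huw hvw heq hle
  obtain ⟨i, hui⟩ := Set.mem_iUnion.1 hu
  obtain ⟨j, hvj⟩ := Set.mem_iUnion.1 hv
  obtain ⟨k, hwk⟩ := Set.mem_iUnion.1 hw
  have hduv : 1 ≤ G.dist u v := hG.pos_dist_of_ne huv
  have hdvw : 1 ≤ G.dist v w := hG.pos_dist_of_ne hvw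
  have hij : i = j := by
    by_contra h
    have := hfar i j h u (hsub i hui) v (hsub j hvj)
    omega
  have hjk : j = k := by
    by_contra h
    have := hfar j k h v (hsub j hvj) w (hsub k hwk)
    omega
  subst hij; subst hjk
  have hu' : u ∈ A i := hsub i hui
  have hv' : v ∈ A i := hsub i hvj
  have hw' : w ∈ A i := hsub i hwk
  refine hgp i (u := ⟨u, hu'⟩) (v := ⟨v, hv'⟩) (w := ⟨w, hw'⟩) hui hvj hwk
    (fun h => huv (congrArg Subtype.val h))
    (fun h => huw (congrArg Subtype.val h))
    (fun h => hvw (congrArg Subtype.val h)) ?_ ?_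
  · rw [hiso i ⟨u, hu'⟩ ⟨v, hv'⟩, hiso i ⟨v, hv'⟩ ⟨w, hw'⟩, hiso i ⟨u, hu'⟩ ⟨w, hw'⟩]
    exact heq
  · rw [hiso i ⟨u, hu'⟩ ⟨w, hw'⟩]; exact hle

lemma ncard_iUnion_fin {V : Type*} [Finite V] {r : ℕ} (T : Fin r → Set V)
    (h : ∀ i j, i ≠ j → Disjoint (T i) (T j)) :
    (⋃ i, T i).ncard = ∑ i, (T i).ncard := by
  classical
  have : ∀ s : Finset (Fin r), (⋃ i ∈ s, T i).ncard = ∑ i ∈ s, (T i).ncard := by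
    intro s
    induction s using Finset.cons_induction with
    | empty => simp
    | cons a s ha ih =>
      rw [Finset.sum_cons, ← ih]
      have hdisj : Disjoint (T a) (⋃ i ∈ s, T i) := by
        refine Set.disjoint_iUnion_right.2 fun i => Set.disjoint_iUnion_right.2 fun hi => ?_
        exact h a i (fun he => ha (he ▸ hi))
      rw [show (⋃ i ∈ Finset.cons a s ha, T i) = T a ∪ ⋃ i ∈ s, T i by simp]
      exact Set.ncard_union_eq hdisj (Set.toFinite _) (Set.toFinite _)
  simpa using this Finset.univ

lemma gpNum_bddAbove {V : Type*} [Finite V] (G : SimpleGraph V) (d : ℕ) :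
    BddAbove {n | ∃ S : Set V, IsGenDPos G d S ∧ S.ncard = n} := by
  refine ⟨Nat.card V, fun n ⟨S, _, hS⟩ => ?_⟩
  rw [← hS]
  calc S.ncard ≤ Set.univ.ncard := Set.ncard_le_ncard (Set.subset_univ S) (Set.toFinite _)
    _ = Nat.card V := Set.ncard_univ V

/-- Isometric subgraphs pairwise at distance at least d: the union of general
d-position sets of the parts is a general d-position set of G, and
gp_d(G) ≥ Σ_i gp_d(H_i). -/
theorem stmt_1 {V : Type*} [Finite V] (G : SimpleGraph V) (hG : G.Connected)
    (d : ℕ) (hd : 2 ≤ d) (r : ℕ) (A : Fin r → Set V)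
    (hiso : ∀ i, ∀ u v : (A i), (G.induce (A i)).dist u v = G.dist u.val v.val)
    (hfar : ∀ i j, i ≠ j → ∀ u ∈ A i, ∀ v ∈ A j, d ≤ G.dist u v)
    (S : Fin r → Set V) (hsub : ∀ i, S i ⊆ A i)
    (hgp : ∀ i, IsGenDPos (G.induce (A i)) d (Subtype.val ⁻¹' (S i))) :
    IsGenDPos G d (⋃ i, S i) ∧
      ∑ i, gpNum (G.induce (A i)) d ≤ gpNum G d := by
  constructor
  · exact union_isGenDPos G hG d hd r A hiso hfar S hsub hgp
  · -- choose maximal gen d-pos set in each part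
    have key : ∀ i, ∃ Ti : Set (A i), IsGenDPos (G.induce (A i)) d Ti ∧
        Ti.ncard = gpNum (G.induce (A i)) d := by
      intro i
      have hne : {n | ∃ S : Set (A i), IsGenDPos (G.induce (A i)) d S ∧ S.ncard = n}.Nonempty :=
        ⟨0, ∅, fun u v w hu _ _ _ _ _ _ _ => hu.elim, Set.ncard_empty _⟩
      exact Nat.sSup_mem hne (gpNum_bddAbove _ _)
    choose T hT hTcard using key
    set S' : Fin r → Set V := fun i => Subtype.val '' T i with hS'
    have hsub' : ∀ i, S' i ⊆ A i := by
      rintro i x ⟨y, _, rfl⟩; exact y.2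
    have hpre : ∀ i, Subtype.val ⁻¹' (S' i) = T i := fun i =>
      Set.preimage_image_eq _ Subtype.val_injective
    have hgp' : ∀ i, IsGenDPos (G.induce (A i)) d (Subtype.val ⁻¹' (S' i)) := by
      intro i; rw [hpre i]; exact hT i
    have hdisjA : ∀ i j, i ≠ j → Disjoint (A i) (A j) := by
      intro i j hij
      rw [Set.disjoint_left]
      intro a hai haj
      have := hfar i j hij a hai a haj
      simp [SimpleGraph.dist_self] at this
      omega
    have hdisj : ∀ i j, i ≠ j → Disjoint (S' i) (S' j) := fun i j hij =>
      (hdisjA i j hij).mono (hsub' i) (hsub' j)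
    have hunion := union_isGenDPos G hG d hd r A hiso hfar S' hsub' hgp'
    have hcard : (⋃ i, S' i).ncard = ∑ i, gpNum (G.induce (A i)) d := by
      rw [ncard_iUnion_fin S' hdisj]
      refine Finset.sum_congr rfl fun i _ => ?_
      rw [hS']
      rw [Set.ncard_image_of_injective _ Subtype.val_injective, hTcard i]
    exact le_csSup (gpNum_bddAbove G d) ⟨⋃ i, S' i, hunion, hcard⟩
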